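/- Let $A$ and $B$ be nonempty compact convex subsets of $\mathbb{R}^{n+1}$ with nonempty interiors. Then the Hausdorff distance between $A$ and $B$ equals the Hausdorff distance between their boundaries: $d_H(A, B) = d_H(\partial A, \partial B)$. -/

import Mathlib

open Metric Set
open scoped RealInnerProductSpace

private lemma le_infDist_aux {α : Type*} [PseudoMetricSpace α] {s : Set α} {x : α} {r : ℝ}
    (hs : s.Nonempty) (H : ∀ y ∈ s, r ≤ dist x y) : r ≤ Metric.infDist x s :=
  le_of_not_gt fun h => by
    obtain ⟨y, hy, hlt⟩ := (Metric.infDist_lt_iff hs).mp h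
    exact absurd hlt (not_lt.mpr (H y hy))

/-- Key lemma 1: for `x ∈ A`, the distance to a closed convex `B` is at most the
Hausdorff distance of the frontiers. -/
private lemma aux_infDist_le_frontier {E : Type*} [NormedAddCommGroup E]
    [InnerProductSpace ℝ E] [FiniteDimensional ℝ E] {A B : Set E}
    (hA : IsCompact A) (hBcl : IsClosed B) (hBc : Convex ℝ B) (hBne : B.Nonempty)
    (hfB : (frontier B).Nonempty)
    (hfin : EMetric.hausdorffEdist (frontier A) (frontier B) ≠ ⊤)
    {x : E} (hx : x ∈ A) :
    Metric.infDist x B ≤ Metric.hausdorffDist (frontier A) (frontier B) := by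
  by_cases hxB : x ∈ B
  · rw [Metric.infDist_zero_of_mem hxB]
    exact Metric.hausdorffDist_nonneg
  · obtain ⟨y, hyB, hxy⟩ := hBcl.exists_infDist_eq_dist hBne x
    have hd : 0 < dist x y := by
      rw [← hxy]
      exact (hBcl.notMem_iff_infDist_pos hBne).mp hxB
    have hvnorm : ‖x - y‖ = dist x y := (dist_eq_norm x y).symm
    have hproj : ∀ b ∈ B, ⟪x - y, b - y⟫ ≤ 0 := by
      rw [← norm_eq_iInf_iff_real_inner_le_zero hBc hyB]
      have h1 : Metric.infDist x B = ⨅ w : B, ‖x - (w : E)‖ := by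
        rw [Metric.infDist_eq_iInf]
        congr 1
        ext w
        rw [dist_eq_norm]
      rw [hvnorm, ← hxy, h1]
    set v := x - y with hv
    have hvpos : 0 < ‖v‖ := by rw [hvnorm]; exact hd
    set T := {t : ℝ | 0 ≤ t ∧ x + t • v ∈ A} with hT
    have hT0 : (0 : ℝ) ∈ T := ⟨le_refl 0, by simpa using hx⟩
    have hTbdd : BddAbove T := by
      obtain ⟨R, hR⟩ := hA.isBounded.subset_closedBall x
      refine ⟨R / ‖v‖, fun t ht => ?_⟩
      have h2 : dist (x + t • v) x ≤ R := hR ht.2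
      have h3 : dist (x + t • v) x = t * ‖v‖ := by
        rw [dist_eq_norm, add_sub_cancel_left, norm_smul, Real.norm_eq_abs,
          abs_of_nonneg ht.1]
      rw [h3] at h2
      exact (le_div_iff₀ hvpos).mpr h2
    have hTclosed : IsClosed T := by
      have : T = Set.Ici (0 : ℝ) ∩ (fun t : ℝ => x + t • v) ⁻¹' A := by
        ext t; simp [hT, Set.mem_Ici, and_comm]
      rw [this]
      exact isClosed_Ici.inter (hA.isClosed.preimage (by continuity))
    set s := sSup T with hs
    have hsT : s ∈ T := hTclosed.csSup_mem ⟨0, hT0⟩ hTbdd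
    set a := x + s • v with ha
    have haA : a ∈ A := hsT.2
    have hs0 : 0 ≤ s := hsT.1
    have hafr : a ∈ frontier A := by
      refine ⟨subset_closure haA, fun hint => ?_⟩
      obtain ⟨ε, hε, hball⟩ := Metric.isOpen_iff.mp isOpen_interior a hint
      set δ := ε / (2 * ‖v‖) with hδ
      have hδpos : 0 < δ := div_pos hε (by positivity)
      have hmem : x + (s + δ) • v ∈ A := by
        apply interior_subset
        apply hball
        rw [Metric.mem_ball, dist_eq_norm]
        have : x + (s + δ) • v - a = δ • v := by
          rw [ha]; module
        rw [this, norm_smul, Real.norm_eq_abs, abs_of_pos hδpos, hδ]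
        rw [div_mul_eq_mul_div, mul_comm (2 : ℝ) ‖v‖, ← div_div, mul_div_assoc,
          div_self (ne_of_gt hvpos), mul_one]
        linarith
      have : s + δ ≤ s := le_csSup hTbdd ⟨by linarith, hmem⟩
      linarith
    have hkey : dist x y ≤ Metric.infDist a B := by
      apply le_infDist_aux hBne
      intro b hb
      have hinner : ‖v‖ ^ 2 ≤ ⟪a - b, v⟫ := by
        have hab : a - b = (1 + s) • v + (y - b) := by rw [ha, hv]; module
        rw [hab, inner_add_left, real_inner_smul_left]
        have h1 : ⟪y - b, v⟫ = -⟪v, b - y⟫ := by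
          rw [show y - b = -(b - y) from by abel, inner_neg_left, real_inner_comm]
        have h2 : 0 ≤ ⟪y - b, v⟫ := by rw [h1]; linarith [hproj b hb]
        have h3 : ⟪v, v⟫ = ‖v‖ ^ 2 := real_inner_self_eq_norm_sq v
        nlinarith [hvpos]
      have hcs : ⟪a - b, v⟫ ≤ ‖a - b‖ * ‖v‖ := real_inner_le_norm _ _
      have : ‖v‖ * ‖v‖ ≤ ‖a - b‖ * ‖v‖ := by nlinarith
      have h5 : ‖v‖ ≤ ‖a - b‖ := le_of_mul_le_mul_right (by linarith) hvpos
      rw [← hvnorm, dist_eq_norm]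
      exact h5
    calc Metric.infDist x B = dist x y := hxy
      _ ≤ Metric.infDist a B := hkey
      _ ≤ Metric.infDist a (frontier B) :=
          Metric.infDist_le_infDist_of_subset hBcl.frontier_subset hfB
      _ ≤ Metric.hausdorffDist (frontier A) (frontier B) :=
          Metric.infDist_le_hausdorffDist_of_mem hafr hfin

/-- Key lemma 2: for `x` in the frontier of a compact convex `A` with nonempty interior,
the distance to the frontier of `B` is at most the Hausdorff distance of `A` and `B`. -/
private lemma aux_frontier_infDist_le {E : Type*} [NormedAddCommGroup E]
    [InnerProductSpace ℝ E] [FiniteDimensional ℝ E] {A B : Set E}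
    (hAcl : IsClosed A) (hAc : Convex ℝ A) (hAi : (interior A).Nonempty)
    (hBcl : IsClosed B) (hBne : B.Nonempty)
    (hfin : EMetric.hausdorffEdist A B ≠ ⊤)
    {x : E} (hx : x ∈ frontier A) :
    Metric.infDist x (frontier B) ≤ Metric.hausdorffDist A B := by
  have hxA : x ∈ A := hAcl.frontier_subset hx
  have hAne : A.Nonempty := ⟨hAi.choose, interior_subset hAi.choose_spec⟩
  by_cases hxB : x ∈ B
  · -- x ∈ B ; use a supporting hyperplane of A at x
    by_contra hlt
    push_neg at hlt
    set r := Metric.hausdorffDist A B with hr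
    set δ := Metric.infDist x (frontier B) with hδ
    have hrpos : 0 ≤ r := Metric.hausdorffDist_nonneg
    have hδpos : 0 < δ := lt_of_le_of_lt hrpos hlt
    have hxint : x ∈ interior B := by
      have hxnf : x ∉ frontier B := by
        intro h
        have : δ ≤ dist x x := Metric.infDist_le_dist_of_mem h
        simp at this
        linarith
      have hxcl : x ∈ closure B := subset_closure hxB
      by_contra h
      exact hxnf ⟨hxcl, h⟩
    have hball : Metric.ball x δ ⊆ interior B := by
      apply (convex_ball x δ).isPreconnected.subset_left_of_subset_union isOpen_interior
        isClosed_closure.isOpen_compl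
      · exact Set.disjoint_left.mpr fun z hz hz' => hz' (interior_subset_closure hz)
      · intro z hz
        by_contra hcon
        simp only [Set.mem_union, not_or, Set.mem_compl_iff, not_not] at hcon
        have hzf : z ∈ frontier B := ⟨hcon.2, hcon.1⟩
        have : δ ≤ dist x z := Metric.infDist_le_dist_of_mem hzf
        rw [Metric.mem_ball, dist_comm] at hz
        linarith
      · exact ⟨x, Metric.mem_ball_self hδpos, hxint⟩
    -- supporting functional
    have hxni : x ∉ interior A := hx.2
    obtain ⟨f, hf⟩ := geometric_hahn_banach_open_point hAc.interior isOpen_interior hxni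
    obtain ⟨a0, ha0⟩ := hAi
    have hfa : ∀ a ∈ A, f a ≤ f x := by
      intro a ha
      have hcont : Continuous fun t : ℝ => f (a + t • (a0 - a)) := by
        apply f.continuous.comp
        continuity
      have htend : Filter.Tendsto (fun t : ℝ => f (a + t • (a0 - a)))
          (nhdsWithin 0 (Set.Ioi 0)) (nhds (f a)) := by
        have h0 := hcont.tendsto 0
        simp only [zero_smul, add_zero] at h0
        exact h0.mono_left nhdsWithin_le_nhds
      refine le_of_tendsto htend ?_
      filter_upwards [Ioc_mem_nhdsGT_of_mem (Set.mem_Ico.mpr ⟨le_refl (0:ℝ), zero_lt_one⟩)]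
        with t ht
      exact (hf _ (hAc.add_smul_sub_mem_interior ha ha0 ht)).le
    obtain ⟨v, hv⟩ := (InnerProductSpace.toDual ℝ E).surjective f
    have hvz : ∀ z : E, ⟪v, z⟫ = f z := fun z => by
      rw [← hv, InnerProductSpace.toDual_apply_apply]
    have hvne : v ≠ 0 := by
      intro h0
      have h1 := hf a0 ha0
      rw [← hvz, ← hvz, h0] at h1
      simp at h1
    have hvpos : 0 < ‖v‖ := norm_pos_iff.mpr hvne
    set u := ‖v‖⁻¹ • v with hu
    have hunorm : ‖u‖ = 1 := by
      rw [hu, norm_smul, Real.norm_eq_abs, abs_of_pos (by positivity)]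
      field_simp
    set t0 := (r + δ) / 2 with ht0
    have h1 : r < t0 := by rw [ht0]; linarith
    have h2 : t0 < δ := by rw [ht0]; linarith
    have ht0pos : 0 < t0 := by linarith
    set q := x + t0 • u with hq
    have hqB : q ∈ B := by
      apply interior_subset
      apply hball
      rw [Metric.mem_ball, hq, dist_eq_norm, add_sub_cancel_left, norm_smul,
        Real.norm_eq_abs, abs_of_pos ht0pos, hunorm, mul_one]
      exact h2
    have hqA : t0 ≤ Metric.infDist q A := by
      apply le_infDist_aux hAne
      intro a ha
      have hxa : 0 ≤ ⟪x - a, u⟫ := by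
        rw [real_inner_comm, hu, real_inner_smul_left, hvz,
          show f (x - a) = f x - f a by rw [map_sub]]
        have := hfa a ha
        apply mul_nonneg (by positivity) (by linarith)
      have hcomp : ⟪q - a, u⟫ = ⟪x - a, u⟫ + t0 := by
        rw [hq, show x + t0 • u - a = (x - a) + t0 • u by module, inner_add_left,
          real_inner_smul_left, real_inner_self_eq_norm_sq, hunorm]
        ring
      have hcs : ⟪q - a, u⟫ ≤ dist q a := by
        calc ⟪q - a, u⟫ ≤ ‖q - a‖ * ‖u‖ := real_inner_le_norm _ _
          _ = dist q a := by rw [hunorm, mul_one, dist_eq_norm]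
      rw [hcomp] at hcs
      linarith
    have hle : Metric.infDist q A ≤ r := by
      rw [hr, Metric.hausdorffDist_comm]
      exact Metric.infDist_le_hausdorffDist_of_mem hqB
        (by unfold EMetric.hausdorffEdist at *; rwa [EMetric.hausdorffEdist_comm])
    linarith
  · -- x ∉ B : the nearest point of B to x lies on the frontier of B
    obtain ⟨y, hyB, hxy⟩ := hBcl.exists_infDist_eq_dist hBne x
    have hd : 0 < dist x y := by
      rw [← hxy]
      exact (hBcl.notMem_iff_infDist_pos hBne).mp hxB
    have hyf : y ∈ frontier B := by
      refine ⟨subset_closure hyB, fun hyint => ?_⟩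
      obtain ⟨ε, hε, hball⟩ := Metric.isOpen_iff.mp isOpen_interior y hyint
      set t := min 1 (ε / (2 * dist x y)) with ht
      have htpos : 0 < t := lt_min one_pos (by positivity)
      have ht1 : t ≤ 1 := min_le_left _ _
      set z := y + t • (x - y) with hz
      have hzB : z ∈ B := by
        apply interior_subset
        apply hball
        rw [Metric.mem_ball, hz, dist_eq_norm, add_sub_cancel_left, norm_smul,
          Real.norm_eq_abs, abs_of_pos htpos]
        have h3 : ‖x - y‖ = dist x y := (dist_eq_norm x y).symm
        rw [h3]
        calc t * dist x y ≤ (ε / (2 * dist x y)) * dist x y := by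
              apply mul_le_mul_of_nonneg_right (min_le_right _ _) hd.le
          _ = ε / 2 := by field_simp
          _ < ε := by linarith
      have hdist : dist x z = (1 - t) * dist x y := by
        rw [hz, dist_eq_norm, show x - (y + t • (x - y)) = (1 - t) • (x - y) by module,
          norm_smul, Real.norm_eq_abs, abs_of_nonneg (by linarith), dist_eq_norm]
      have hle : dist x y ≤ dist x z := by
        rw [← hxy]
        exact Metric.infDist_le_dist_of_mem hzB
      rw [hdist] at hle
      nlinarith
    calc Metric.infDist x (frontier B) ≤ dist x y := Metric.infDist_le_dist_of_mem hyf
      _ = Metric.infDist x B := hxy.symm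
      _ ≤ Metric.hausdorffDist A B := Metric.infDist_le_hausdorffDist_of_mem hxA hfin

/-- A compact set with nonempty interior in `ℝ^(n+1)` has nonempty frontier. -/
private lemma frontier_nonempty_aux {n : ℕ} {S : Set (EuclideanSpace ℝ (Fin (n + 1)))}
    (hS : IsCompact S) (hSi : (interior S).Nonempty) : (frontier S).Nonempty := by
  by_contra h
  rw [Set.not_nonempty_iff_eq_empty] at h
  have hclop : IsClopen S := isClopen_iff_frontier_eq_empty.mpr h
  rcases isClopen_iff.mp hclop with rfl | rfl
  · simp at hSi
  · exact noncompact_univ _ hS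

/-- For nonempty compact convex bodies in `ℝ^(n+1)`, the Hausdorff distance equals
the Hausdorff distance of their boundaries. -/
theorem hausdorffDist_eq_boundaries (n : ℕ)
    (A B : Set (EuclideanSpace ℝ (Fin (n + 1))))
    (hA : IsCompact A) (hB : IsCompact B)
    (hAc : Convex ℝ A) (hBc : Convex ℝ B)
    (hAi : (interior A).Nonempty) (hBi : (interior B).Nonempty) :
    Metric.hausdorffDist A B = Metric.hausdorffDist (frontier A) (frontier B) := by
  have hAne : A.Nonempty := ⟨hAi.choose, interior_subset hAi.choose_spec⟩
  have hBne : B.Nonempty := ⟨hBi.choose, interior_subset hBi.choose_spec⟩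
  have hfA : (frontier A).Nonempty := frontier_nonempty_aux hA hAi
  have hfB : (frontier B).Nonempty := frontier_nonempty_aux hB hBi
  have hfinAB : EMetric.hausdorffEdist A B ≠ ⊤ :=
    Metric.hausdorffEdist_ne_top_of_nonempty_of_bounded hAne hBne hA.isBounded hB.isBounded
  have hfinF : EMetric.hausdorffEdist (frontier A) (frontier B) ≠ ⊤ :=
    Metric.hausdorffEdist_ne_top_of_nonempty_of_bounded hfA hfB
      (hA.isBounded.subset hA.isClosed.frontier_subset)
      (hB.isBounded.subset hB.isClosed.frontier_subset)
  apply le_antisymm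
  · apply Metric.hausdorffDist_le_of_infDist Metric.hausdorffDist_nonneg
    · intro x hx
      exact aux_infDist_le_frontier hA hB.isClosed hBc hBne hfB hfinF hx
    · intro x hx
      rw [Metric.hausdorffDist_comm]
      exact aux_infDist_le_frontier hB hA.isClosed hAc hAne hfA
        (by unfold EMetric.hausdorffEdist at *; rwa [EMetric.hausdorffEdist_comm]) hx
  · apply Metric.hausdorffDist_le_of_infDist Metric.hausdorffDist_nonneg
    · intro x hx
      exact aux_frontier_infDist_le hA.isClosed hAc hAi hB.isClosed hBne hfinAB hx
    · intro x hx
      rw [Metric.hausdorffDist_comm]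
      exact aux_frontier_infDist_le hB.isClosed hBc hBi hA.isClosed hAne
        (by unfold EMetric.hausdorffEdist at *; rwa [EMetric.hausdorffEdist_comm]) hx
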